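/- For every v ∈ F, the fixed subgroup Fix(γ_{ι v} ∘ ψ) contains an element of the form ι(g)⁻¹ · z · ι(g) for some g ∈ F if and only if it contains some element that does not lie in the image of ι (i.e., some word involving the letter z). -/

import Mathlib

open List

namespace FGAux

variable {α : Type*} [DecidableEq α]

/-- The non-cancellation relation between adjacent letters. -/
def fgR (a b : α × Bool) : Prop := ¬(a.1 = b.1 ∧ a.2 = !b.2)

theorem reduce_eq_self_of_chain' :
    ∀ {L : List (α × Bool)}, List.Chain' fgR L → FreeGroup.reduce L = L := by
  intro L h
  induction L with
  | nil => rfl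
  | cons a L ih =>
    have hL : FreeGroup.reduce L = L := ih h.tail
    rw [FreeGroup.reduce.cons, hL]
    cases L with
    | nil => rfl
    | cons b t =>
      have hab : fgR a b := (List.isChain_cons_cons.mp h).1
      simp only [fgR] at hab
      simp [if_neg hab]

theorem chain'_of_reduce_eq_self :
    ∀ {L : List (α × Bool)}, FreeGroup.reduce L = L → List.Chain' fgR L := by
  intro L
  induction L with
  | nil => intro _; exact List.isChain_nil
  | cons a L ih =>
    intro h
    rw [FreeGroup.reduce.cons] at h
    cases hL : FreeGroup.reduce L with
    | nil =>
      rw [hL] at h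
      simp only at h
      have hL0 : L = [] := by
        injection h with h1 h2
        exact h2.symm
      subst hL0
      exact List.isChain_singleton _
    | cons b t =>
      rw [hL] at h
      simp only at h
      by_cases hc : a.1 = b.1 ∧ a.2 = !b.2
      · rw [if_pos hc] at h
        -- h : t = a :: L, but length t < length L + 1
        have hlen : (FreeGroup.reduce L).length ≤ L.length :=
          (FreeGroup.reduce.red (L := L)).length_le
        rw [hL] at hlen
        have h2 := congrArg List.length h
        simp only [List.length_cons] at h2 hlen
        omega
      · rw [if_neg hc] at h
        have h' : L = b :: t := by
          injection h with _ h'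
          exact h'.symm
        subst h'
        exact List.isChain_cons_cons.mpr ⟨hc, ih hL⟩

theorem chain'_toWord (x : FreeGroup α) : List.Chain' fgR x.toWord :=
  chain'_of_reduce_eq_self (FreeGroup.reduce_toWord x)


section OptionLemmas

variable {α : Type*} [DecidableEq α]

/-- Every letter in the reduced word of an element of the image of `map some` is a
`some` letter. -/
theorem allsome_toWord (w : FreeGroup α) :
    ∀ l ∈ (FreeGroup.map (Option.some : α → Option α) w).toWord, l.1 ≠ none := by
  intro l hl
  have h1 : (FreeGroup.map (Option.some : α → Option α) w).toWord =
      FreeGroup.reduce ((w.toWord).map fun x => ((Option.some x.1 : Option α), x.2)) := by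
    conv_lhs => rw [← FreeGroup.mk_toWord (x := w)]
    rw [FreeGroup.map.mk, FreeGroup.toWord_mk]
  rw [h1] at hl
  have hsub := (FreeGroup.reduce.red
    (L := (w.toWord).map fun x => ((Option.some x.1 : Option α), x.2))).sublist
  have hl2 := hsub.subset hl
  rcases List.mem_map.mp hl2 with ⟨p, _, rfl⟩
  simp

theorem SR_range (w : FreeGroup α) (ε : Bool) :
    ∀ t, (FreeGroup.map (Option.some : α → Option α) w).toWord ≠ ((none : Option α), ε) :: t := by
  intro t ht
  have : ((none : Option α), ε) ∈ (FreeGroup.map (Option.some : α → Option α) w).toWord := by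
    rw [ht]; exact List.mem_cons_self
  exact allsome_toWord w _ this rfl

/-- Reduced concatenation: the word of `ι a * z^ε * y`. -/
theorem redcat (d : FreeGroup α) (ε : Bool) (y : FreeGroup (Option α))
    (hy : ∀ t, y.toWord ≠ ((none : Option α), !ε) :: t) :
    (FreeGroup.map (Option.some : α → Option α) d *
        FreeGroup.mk [((none : Option α), ε)] * y).toWord =
      (FreeGroup.map (Option.some : α → Option α) d).toWord ++
        ((none : Option α), ε) :: y.toWord := by
  set P := (FreeGroup.map (Option.some : α → Option α) d).toWord with hP
  set Q := y.toWord with hQ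
  have hprod : FreeGroup.map (Option.some : α → Option α) d *
      FreeGroup.mk [((none : Option α), ε)] * y =
      FreeGroup.mk (P ++ ((none : Option α), ε) :: Q) := by
    conv_lhs => rw [← FreeGroup.mk_toWord
        (x := FreeGroup.map (Option.some : α → Option α) d), ← FreeGroup.mk_toWord (x := y)]
    rw [FreeGroup.mul_mk, FreeGroup.mul_mk]
    congr 1
    simp
    rfl
  rw [hprod, FreeGroup.toWord_mk]
  apply reduce_eq_self_of_chain'
  apply List.IsChain.append
  · exact chain'_of_reduce_eq_self (by rw [hP]; exact FreeGroup.reduce_toWord _)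
  · -- Chain' fgR ((none, ε) :: Q)
    cases hQc : Q with
    | nil => simp [List.isChain_singleton]
    | cons q t =>
      rw [List.isChain_cons_cons]
      constructor
      · intro ⟨h1, h2⟩
        apply hy t
        rw [hQc]
        obtain ⟨q1, q2⟩ := q
        simp only at h1 h2
        cases q2 <;> cases ε <;>
          simp only [Bool.not_true, Bool.not_false] at h2 ⊢ <;>
          first
          | exact absurd h2 (by decide)
          | rw [← h1]
      · have := chain'_toWord y
        rw [← hQ, hQc] at this
        exact this
  · intro a ha b hb
    have ha' : a ∈ P := List.mem_of_mem_getLast? ha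
    have hb' : b = ((none : Option α), ε) := by
      rw [Option.mem_def, List.head?_cons, Option.some_inj] at hb
      exact hb.symm
    intro ⟨h1, _⟩
    exact allsome_toWord d a ha' (by rw [h1, hb'])

end OptionLemmas

section Decomp

variable {α : Type*} [DecidableEq α]

theorem split_at_none :
    ∀ (L : List (Option α × Bool)), (∃ l ∈ L, l.1 = none) →
      ∃ p ε q, L = p ++ ((none : Option α), ε) :: q ∧ ∀ l ∈ p, l.1 ≠ none := by
  intro L
  induction L with
  | nil => rintro ⟨l, hl, _⟩; cases hl
  | cons a L ih =>
    intro h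
    by_cases ha : a.1 = none
    · obtain ⟨a1, a2⟩ := a
      simp only at ha
      subst ha
      exact ⟨[], a2, L, rfl, by simp⟩
    · have h' : ∃ l ∈ L, l.1 = none := by
        rcases h with ⟨l, hl, hln⟩
        rcases List.mem_cons.mp hl with rfl | hl'
        · exact absurd hln ha
        · exact ⟨l, hl', hln⟩
      obtain ⟨p, ε, q, hL, hp⟩ := ih h'
      exact ⟨a :: p, ε, q, by rw [List.cons_append, hL], by
        intro l hl
        rcases List.mem_cons.mp hl with rfl | hl'
        · exact ha
        · exact hp l hl'⟩

theorem allsome_preimage :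
    ∀ (L : List (Option α × Bool)), (∀ l ∈ L, l.1 ≠ none) →
      ∃ M : List (α × Bool), M.map (fun p => ((Option.some p.1 : Option α), p.2)) = L := by
  intro L
  induction L with
  | nil => exact fun _ => ⟨[], rfl⟩
  | cons a L ih =>
    intro h
    obtain ⟨M, hM⟩ := ih fun l hl => h l (List.mem_cons_of_mem _ hl)
    obtain ⟨a1, a2⟩ := a
    have ha1 : a1 ≠ none := h (a1, a2) (List.mem_cons_self)
    obtain ⟨b, rfl⟩ := Option.ne_none_iff_exists'.mp ha1
    exact ⟨(b, a2) :: M, by simp [hM]⟩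

theorem map_some_injective :
    Function.Injective (FreeGroup.map (Option.some : α → Option α)) := by
  have hleft : ∀ w : FreeGroup α,
      FreeGroup.lift (fun o : Option α => o.elim 1 FreeGroup.of)
        (FreeGroup.map (Option.some : α → Option α) w) = w := by
    intro w
    have : (FreeGroup.lift (fun o : Option α => o.elim 1 FreeGroup.of)).comp
        (FreeGroup.map (Option.some : α → Option α)) = MonoidHom.id (FreeGroup α) := by
      apply FreeGroup.ext_hom
      intro a
      simp [FreeGroup.map.of, FreeGroup.lift_apply_of]
    exact DFunLike.congr_fun this w
  intro a b hab
  rw [← hleft a, ← hleft b, hab]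

theorem decomp (x : FreeGroup (Option α))
    (hx : x ∉ Set.range (FreeGroup.map (Option.some : α → Option α))) :
    ∃ (a : FreeGroup α) (ε : Bool) (y : FreeGroup (Option α)),
      x = FreeGroup.map (Option.some : α → Option α) a *
          FreeGroup.mk [((none : Option α), ε)] * y ∧
      (∀ t, y.toWord ≠ ((none : Option α), !ε) :: t) ∧
      x.toWord = (FreeGroup.map (Option.some : α → Option α) a).toWord ++
        ((none : Option α), ε) :: y.toWord := by
  have hnone : ∃ l ∈ x.toWord, l.1 = none := by
    by_contra hc
    push_neg at hc
    obtain ⟨M, hM⟩ := allsome_preimage x.toWord hc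
    exact hx ⟨FreeGroup.mk M, by rw [FreeGroup.map.mk, hM, FreeGroup.mk_toWord]⟩
  obtain ⟨p, ε, q, hL, hp⟩ := split_at_none x.toWord hnone
  have hchain : List.Chain' fgR x.toWord := chain'_toWord x
  have hchainp : List.Chain' fgR p := hchain.prefix ⟨_, hL.symm⟩
  have hchaincq : List.Chain' fgR (((none : Option α), ε) :: q) :=
    hchain.suffix ⟨p, hL.symm⟩
  have hchainq : List.Chain' fgR q := hchaincq.tail
  obtain ⟨M, hM⟩ := allsome_preimage p hp
  refine ⟨FreeGroup.mk M, ε, FreeGroup.mk q, ?_, ?_, ?_⟩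
  · rw [FreeGroup.map.mk, hM]
    conv_lhs => rw [← FreeGroup.mk_toWord (x := x), hL]
    rw [FreeGroup.mul_mk, FreeGroup.mul_mk]
    congr 1
    simp
  · intro t ht
    rw [FreeGroup.toWord_mk, reduce_eq_self_of_chain' hchainq] at ht
    subst ht
    rcases List.isChain_cons_cons.mp hchaincq with ⟨hR, _⟩
    exact hR ⟨rfl, by simp⟩
  · rw [FreeGroup.map.mk, hM, FreeGroup.toWord_mk, FreeGroup.toWord_mk,
      reduce_eq_self_of_chain' hchainp, reduce_eq_self_of_chain' hchainq, hL]

theorem prefix_none_eq :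
    ∀ (p₁ p₂ : List (Option α × Bool)) (x₁ x₂ : Option α × Bool)
      (t₁ t₂ : List (Option α × Bool)),
      (∀ l ∈ p₁, l.1 ≠ none) → (∀ l ∈ p₂, l.1 ≠ none) → x₁.1 = none → x₂.1 = none →
      p₁ ++ x₁ :: t₁ = p₂ ++ x₂ :: t₂ → p₁ = p₂ ∧ x₁ = x₂ ∧ t₁ = t₂ := by
  intro p₁
  induction p₁ with
  | nil =>
    intro p₂ x₁ x₂ t₁ t₂ _ hp₂ hx₁ _ h
    cases p₂ with
    | nil =>
      simp only [List.nil_append] at h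
      injection h with h1 h2
      exact ⟨rfl, h1, h2⟩
    | cons b p₂ =>
      simp only [List.nil_append, List.cons_append] at h
      injection h with h1 _
      exact absurd (h1 ▸ hx₁) (hp₂ b (List.mem_cons_self))
  | cons a p₁ ih =>
    intro p₂ x₁ x₂ t₁ t₂ hp₁ hp₂ hx₁ hx₂ h
    cases p₂ with
    | nil =>
      simp only [List.cons_append, List.nil_append] at h
      injection h with h1 _
      exact absurd (h1.symm ▸ hx₂) (hp₁ a (List.mem_cons_self))
    | cons b p₂ =>
      simp only [List.cons_append] at h
      injection h with h1 h2
      obtain ⟨hpp, hxx, htt⟩ := ih p₂ x₁ x₂ t₁ t₂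
        (fun l hl => hp₁ l (List.mem_cons_of_mem _ hl))
        (fun l hl => hp₂ l (List.mem_cons_of_mem _ hl)) hx₁ hx₂ h2
      exact ⟨by rw [h1, hpp], hxx, htt⟩

end Decomp

end FGAux

/-- The fixed subgroup of `γ_{ι v} ∘ ψ` contains an element of the form
`(ι g)⁻¹ * z * ι g` with `g ∈ F` iff it contains some element outside the image of `ι`
(i.e. some word involving the letter `z`). -/
theorem fixed_conj_z_iff_fixed_outside_range {α : Type*}
    (φ : MulAut (FreeGroup α)) (u : FreeGroup α)
    (ι : FreeGroup α →* FreeGroup (Option α)) (hι : ι = FreeGroup.map Option.some)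
    (z : FreeGroup (Option α)) (hz : z = FreeGroup.of none)
    (ψ : MulAut (FreeGroup (Option α)))
    (hψ : ∀ w : FreeGroup α, ψ (ι w) = ι (φ w))
    (hψz : ψ z = ι u * z * (ι u)⁻¹) (v : FreeGroup α) :
    (∃ g : FreeGroup α,
        (ι v)⁻¹ * ψ ((ι g)⁻¹ * z * ι g) * ι v = (ι g)⁻¹ * z * ι g) ↔
      (∃ x : FreeGroup (Option α),
        (ι v)⁻¹ * ψ x * ι v = x ∧ x ∉ Set.range ι) := by
  classical
  subst hι hz
  constructor
  · rintro ⟨g, hg⟩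
    refine ⟨(FreeGroup.map Option.some g)⁻¹ * FreeGroup.of none * FreeGroup.map Option.some g,
      hg, ?_⟩
    rintro ⟨h, hh⟩
    set χ := FreeGroup.lift
      (fun o : Option α => Multiplicative.ofAdd (if o.isNone then (1 : ℤ) else 0)) with hχ
    have hχι : ∀ w : FreeGroup α, χ (FreeGroup.map Option.some w) = 1 := by
      intro w
      have hcomp : χ.comp (FreeGroup.map (Option.some : α → Option α)) = 1 := by
        apply FreeGroup.ext_hom
        intro a
        simp [hχ, FreeGroup.map.of, FreeGroup.lift_apply_of]
      have := DFunLike.congr_fun hcomp w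
      simpa using this
    have h1 : χ ((FreeGroup.map Option.some g)⁻¹ * FreeGroup.of none *
        FreeGroup.map Option.some g) = Multiplicative.ofAdd (1 : ℤ) := by
      rw [map_mul, map_mul, map_inv, hχι]
      simp [hχ, FreeGroup.lift_apply_of]
    rw [← hh, hχι] at h1
    exact absurd h1 (by decide)
  · rintro ⟨x, hfix, hxr⟩
    obtain ⟨f, hf⟩ : ∃ f : FreeGroup α → FreeGroup α, f = fun a => v⁻¹ * φ a * v := ⟨_, rfl⟩
    obtain ⟨c, hc⟩ : ∃ c : FreeGroup α, c = v⁻¹ * u := ⟨_, rfl⟩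
    obtain ⟨θ, hθdef⟩ : ∃ θ : FreeGroup (Option α) → FreeGroup (Option α),
      θ = fun w => (FreeGroup.map Option.some v)⁻¹ * ψ w * FreeGroup.map Option.some v := ⟨_, rfl⟩
    have hmul : ∀ a b, θ (a * b) = θ a * θ b := by
      intro a b
      simp only [hθdef, map_mul]
      group
    have hinv : ∀ a, θ a⁻¹ = (θ a)⁻¹ := by
      intro a
      simp only [hθdef, map_inv]
      group
    have hfc : ∀ w, θ (FreeGroup.map Option.some w) = FreeGroup.map Option.some (f w) := by
      intro w
      simp only [hθdef, hψ w, hf, map_mul, map_inv]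
    have hθz : θ (FreeGroup.of (none : Option α)) =
        FreeGroup.map Option.some c * FreeGroup.of (none : Option α) *
          (FreeGroup.map Option.some c)⁻¹ := by
      simp only [hθdef, hψz, hc, map_mul, map_inv]
      group
    have hz0 : FreeGroup.mk [((none : Option α), false)] =
        (FreeGroup.of (none : Option α))⁻¹ := by
      rw [show FreeGroup.of (none : Option α) = FreeGroup.mk [((none : Option α), true)] from rfl,
        FreeGroup.inv_mk]
      rfl
    have hθm : ∀ ε : Bool, θ (FreeGroup.mk [((none : Option α), ε)]) =
        FreeGroup.map Option.some c * FreeGroup.mk [((none : Option α), ε)] *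
          (FreeGroup.map Option.some c)⁻¹ := by
      intro ε
      cases ε
      · rw [hz0, hinv, hθz]
        group
      · exact hθz
    have hfixθ : θ x = x := by rw [hθdef]; exact hfix
    have hcomp : ∀ b : FreeGroup α, (FreeGroup.map Option.some c)⁻¹ *
        θ (FreeGroup.map Option.some b) = FreeGroup.map Option.some (c⁻¹ * f b) := by
      intro b
      rw [hfc]
      simp only [map_mul, map_inv]
    have K : ∀ (n : ℕ) (y : FreeGroup (Option α)) (ε : Bool), y.toWord.length ≤ n →
        (∀ t, y.toWord ≠ ((none : Option α), !ε) :: t) →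
        (∀ t, ((FreeGroup.map Option.some c)⁻¹ * θ y).toWord ≠ ((none : Option α), !ε) :: t) := by
      intro n
      induction n with
      | zero =>
        intro y ε hlen _
        have hy1 : y = 1 :=
          FreeGroup.toWord_eq_nil_iff.mp (List.length_eq_zero_iff.mp (Nat.le_zero.mp hlen))
        subst hy1
        have h := hcomp 1
        rw [map_one] at h
        rw [h]
        exact FGAux.SR_range _ _
      | succ n ih =>
        intro y ε hlen hSR
        by_cases hy : y ∈ Set.range (FreeGroup.map (Option.some : α → Option α))
        · obtain ⟨b, rfl⟩ := hy
          rw [hcomp b]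
          exact FGAux.SR_range _ _
        · obtain ⟨b, ε₂, y₂, hdec, hSR₂, htw⟩ := FGAux.decomp y hy
          have hlen₂ : y₂.toWord.length ≤ n := by
            have := congrArg List.length htw
            simp only [List.length_append, List.length_cons] at this
            omega
          have hK₂ := ih y₂ ε₂ hlen₂ hSR₂
          have hprod : (FreeGroup.map Option.some c)⁻¹ * θ y =
              FreeGroup.map Option.some (c⁻¹ * f b * c) *
                FreeGroup.mk [((none : Option α), ε₂)] *
                ((FreeGroup.map Option.some c)⁻¹ * θ y₂) := by
            rw [hdec, hmul, hmul, hθm ε₂, hfc]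
            simp only [map_mul, map_inv]
            group
          have htw' := FGAux.redcat (c⁻¹ * f b * c) ε₂
            ((FreeGroup.map Option.some c)⁻¹ * θ y₂) hK₂
          intro t ht
          rw [hprod, htw'] at ht
          cases hP : (FreeGroup.map (Option.some : α → Option α) (c⁻¹ * f b * c)).toWord with
          | cons l ls =>
            rw [hP] at ht
            simp only [List.cons_append] at ht
            injection ht with h1 _
            exact FGAux.allsome_toWord _ l (hP ▸ List.mem_cons_self) (by rw [h1])
          | nil =>
            rw [hP] at ht
            simp only [List.nil_append] at ht
            injection ht with h1 h2
            have hε : ε₂ = !ε := by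
              injection h1 with _ hb
            have hone : c⁻¹ * f b * c = 1 := by
              apply FGAux.map_some_injective
              rw [map_one]
              exact FreeGroup.toWord_eq_nil_iff.mp hP
            have hb1 : b = 1 := by
              have hfb : f b = 1 := by
                calc f b = c * (c⁻¹ * f b * c) * c⁻¹ := by group
                _ = 1 := by rw [hone]; group
              have hφ : φ b = 1 := by
                calc φ b = v * (v⁻¹ * φ b * v) * v⁻¹ := by group
                _ = 1 := by
                  rw [show v⁻¹ * φ b * v = f b from by rw [hf], hfb]; group
              have := φ.injective (a₁ := b) (a₂ := 1)
              apply this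
              rw [hφ, map_one]
            apply hSR y₂.toWord
            rw [htw, hb1, map_one]
            simp [hε]
    obtain ⟨a, ε, y, hdec, hSRy, htwx⟩ := FGAux.decomp x hxr
    have hSR' := K y.toWord.length y ε le_rfl hSRy
    have hθx : θ x = FreeGroup.map Option.some (f a * c) *
        FreeGroup.mk [((none : Option α), ε)] *
        ((FreeGroup.map Option.some c)⁻¹ * θ y) := by
      rw [hdec, hmul, hmul, hθm ε, hfc]
      simp only [map_mul, map_inv]
      group
    have htwθ := FGAux.redcat (f a * c) ε ((FreeGroup.map Option.some c)⁻¹ * θ y) hSR'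
    have hxeq : x.toWord = (FreeGroup.map (Option.some : α → Option α) (f a * c)).toWord ++
        ((none : Option α), ε) :: ((FreeGroup.map Option.some c)⁻¹ * θ y).toWord := by
      conv_lhs => rw [← hfixθ]
      rw [hθx, htwθ]
    have heq := FGAux.prefix_none_eq _ _ _ _ _ _ (FGAux.allsome_toWord a)
      (FGAux.allsome_toWord (f a * c)) rfl rfl (htwx.symm.trans hxeq)
    have hkey : a = f a * c := FGAux.map_some_injective (FreeGroup.toWord_injective heq.1)
    refine ⟨a⁻¹, ?_⟩
    have goalθ : θ (FreeGroup.map Option.some a * FreeGroup.of (none : Option α) *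
        (FreeGroup.map Option.some a)⁻¹) =
        FreeGroup.map Option.some a * FreeGroup.of (none : Option α) *
          (FreeGroup.map Option.some a)⁻¹ := by
      rw [hmul, hmul, hinv, hfc, hθz]
      conv_rhs => rw [hkey]
      simp only [map_mul, map_inv]
      group
    have harg : (FreeGroup.map Option.some a⁻¹)⁻¹ * FreeGroup.of (none : Option α) *
        FreeGroup.map Option.some a⁻¹ =
        FreeGroup.map Option.some a * FreeGroup.of (none : Option α) *
          (FreeGroup.map Option.some a)⁻¹ := by
      simp [map_inv]
    rw [harg]
    rw [hθdef] at goalθ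
    exact goalθ
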